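/- Fix k ∈ ℕ. Let W^k = {(a, b, x) ∈ [0, ∞)^k × [0, ∞)^k × ℝ^k : −b_i ≤ x_i ≤ a_i for all i}. For (a, b) define Y_i(a, b) = Σ_{j=i+1}^k a_j + Σ_{j=i}^k b_j, and define g : W^k → ℝ by g(a, b, x) = (2/3)·Σ_{i=1}^k [ (Y_i(a, b))^{3/2} + (Y_i(a, b) + x_i)^{3/2} ]. For β > 0 let D_β = {(a, b, x) ∈ W^k : Σ_{i=1}^k (2a_i + 2b_i − |x_i|)² ≤ β²}. Define Θ : ℝ^k → ℝ by Θ(x) = (2/3)·(Σ_{i=1}^k |x_i|)^{3/2} + (4/3)·Σ_{j=2}^k (Σ_{i=j}^k |x_i|)^{3/2}, and let α_k be the maximum of Θ over the Euclidean unit sphere {x ∈ ℝ^k : ‖x‖₂ = 1}. Then for every β > 0, the maximum of g over D_β exists and equals β^{3/2}·α_k. -/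
import Mathlib


/-- `Y_i(a, b) = Σ_{j > i} a_j + Σ_{j ≥ i} b_j` (0-indexed version of the paper's
`Y_i(a, b) = Σ_{j=i+1}^k a_j + Σ_{j=i}^k b_j`). -/
noncomputable def Yfun (k : ℕ) (a b : Fin k → ℝ) (i : Fin k) : ℝ :=
  (∑ j : Fin k, if i < j then a j else 0) + ∑ j : Fin k, if i ≤ j then b j else 0

/-- The set `W^k = {(a, b, x) ∈ [0,∞)^k × [0,∞)^k × ℝ^k : −bᵢ ≤ xᵢ ≤ aᵢ ∀ i}`. -/
def Wset (k : ℕ) : Set ((Fin k → ℝ) × (Fin k → ℝ) × (Fin k → ℝ)) :=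
  {p | ∀ i, 0 ≤ p.1 i ∧ 0 ≤ p.2.1 i ∧ -p.2.1 i ≤ p.2.2 i ∧ p.2.2 i ≤ p.1 i}

/-- The objective `g(a, b, x) = (2/3) Σᵢ [Yᵢ(a,b)^{3/2} + (Yᵢ(a,b) + xᵢ)^{3/2}]`. -/
noncomputable def gObj (k : ℕ) (p : (Fin k → ℝ) × (Fin k → ℝ) × (Fin k → ℝ)) : ℝ :=
  2 / 3 * ∑ i : Fin k,
    (Yfun k p.1 p.2.1 i ^ (3 / 2 : ℝ) + (Yfun k p.1 p.2.1 i + p.2.2 i) ^ (3 / 2 : ℝ))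

/-- `D_β = {(a, b, x) ∈ W^k : Σᵢ (2aᵢ + 2bᵢ − |xᵢ|)² ≤ β²}`. -/
def Dset (k : ℕ) (β : ℝ) : Set ((Fin k → ℝ) × (Fin k → ℝ) × (Fin k → ℝ)) :=
  Wset k ∩ {p | ∑ i : Fin k, (2 * p.1 i + 2 * p.2.1 i - |p.2.2 i|) ^ 2 ≤ β ^ 2}

/-- `Θ(x) = (2/3)(Σᵢ |xᵢ|)^{3/2} + (4/3) Σ_{j ≥ 2} (Σ_{i ≥ j} |xᵢ|)^{3/2}` (the paper's
1-indexed `j` ranges over `2, …, k`, i.e. 0-indexed `j` with `(j : ℕ) ≥ 1`). -/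
noncomputable def Theta (k : ℕ) (x : Fin k → ℝ) : ℝ :=
  2 / 3 * (∑ i : Fin k, |x i|) ^ (3 / 2 : ℝ) +
    4 / 3 * ∑ j : Fin k,
      if 1 ≤ (j : ℕ) then (∑ i : Fin k, if j ≤ i then |x i| else 0) ^ (3 / 2 : ℝ) else 0

noncomputable def tl (k : ℕ) (f : Fin k → ℝ) (n : ℕ) : ℝ :=
  ∑ i : Fin k, if n ≤ (i : ℕ) then f i else 0

lemma tl_nonneg {k : ℕ} {f : Fin k → ℝ} (hf : ∀ i, 0 ≤ f i) (n : ℕ) : 0 ≤ tl k f n :=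
  Finset.sum_nonneg fun i _ => by split <;> simp [hf i]

lemma tl_mono_fun {k : ℕ} {f g : Fin k → ℝ} (h : ∀ i, f i ≤ g i) (n : ℕ) :
    tl k f n ≤ tl k g n :=
  Finset.sum_le_sum fun i _ => by split <;> simp [h i]

lemma tl_succ_le {k : ℕ} {f : Fin k → ℝ} (hf : ∀ i, 0 ≤ f i) (n : ℕ) :
    tl k f (n + 1) ≤ tl k f n :=
  Finset.sum_le_sum fun i _ => by
    by_cases h1 : n + 1 ≤ (i : ℕ)
    · rw [if_pos h1, if_pos (by omega)]
    · rw [if_neg h1]; split <;> simp [hf i]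

lemma tl_add {k : ℕ} (f g : Fin k → ℝ) (n : ℕ) :
    tl k (fun i => f i + g i) n = tl k f n + tl k g n := by
  simp only [tl, ← Finset.sum_add_distrib]
  exact Finset.sum_congr rfl fun i _ => by split <;> simp

lemma tl_top {k : ℕ} (f : Fin k → ℝ) : tl k f k = 0 := by
  simp only [tl]
  exact Finset.sum_eq_zero fun i _ => by simp [Nat.not_le.2 i.isLt]

lemma tl_step {k : ℕ} (f : Fin k → ℝ) (i : Fin k) :
    tl k f i = f i + tl k f ((i : ℕ) + 1) := by
  have h : ∀ j : Fin k, (if (i : ℕ) ≤ (j : ℕ) then f j else 0) =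
      (if i = j then f j else 0) + (if (i : ℕ) + 1 ≤ (j : ℕ) then f j else 0) := by
    intro j
    rcases lt_trichotomy (i : ℕ) (j : ℕ) with h | h | h
    · rw [if_pos h.le, if_neg (by simp [Fin.ext_iff]; omega), if_pos (by omega)]; ring
    · rw [if_pos h.le, if_pos (Fin.ext h), if_neg (by omega)]; ring
    · rw [if_neg (by omega), if_neg (by simp [Fin.ext_iff]; omega), if_neg (by omega)]; ring
  rw [tl, Finset.sum_congr rfl fun j _ => h j, Finset.sum_add_distrib]
  simp [tl, Finset.sum_ite_eq]

lemma tl_zero' {k : ℕ} (f : Fin k → ℝ) : tl k f 0 = ∑ i, f i := by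
  simp [tl]

lemma rpow_superadd {u v : ℝ} (hu : 0 ≤ u) (hv : 0 ≤ v) :
    u ^ (3/2 : ℝ) + v ^ (3/2 : ℝ) ≤ (u + v) ^ (3/2 : ℝ) := by
  lift u to NNReal using hu
  lift v to NNReal using hv
  rw [← NNReal.coe_add, ← NNReal.coe_rpow, ← NNReal.coe_rpow, ← NNReal.coe_rpow,
    ← NNReal.coe_add, NNReal.coe_le_coe]
  exact NNReal.add_rpow_le_rpow_add _ _ (by norm_num)

lemma rpow_key {u v M m : ℝ} (hu : 0 ≤ u) (hv : 0 ≤ v) (hm : 0 ≤ m)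
    (huM : u ≤ M) (hvM : v ≤ M) (hsum : u + v ≤ M + m) :
    u ^ (3/2 : ℝ) + v ^ (3/2 : ℝ) ≤ M ^ (3/2 : ℝ) + m ^ (3/2 : ℝ) := by
  have hM : (0:ℝ) ≤ M := le_trans hu huM
  by_cases hc : u + v ≤ M
  · calc u ^ (3/2:ℝ) + v ^ (3/2:ℝ) ≤ (u + v) ^ (3/2:ℝ) := rpow_superadd hu hv
      _ ≤ M ^ (3/2:ℝ) := Real.rpow_le_rpow (by positivity) hc (by norm_num)
      _ ≤ M ^ (3/2:ℝ) + m ^ (3/2:ℝ) := le_add_of_nonneg_right (Real.rpow_nonneg hm _)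
  · push_neg at hc
    set w : ℝ := u + v - M with hw
    have hw0 : 0 ≤ w := by simp only [hw]; linarith
    have hwm : w ≤ m := by simp only [hw]; linarith
    have hwu : w ≤ u := by simp only [hw]; linarith
    have hwM : w ≤ M := le_trans hwu huM
    have c1 : ConvexOn ℝ (Set.Icc w M) (fun t : ℝ => t ^ (3/2:ℝ)) :=
      (convexOn_rpow (by norm_num)).subset (fun t ht => le_trans hw0 ht.1) (convex_Icc _ _)
    have c2 : ConvexOn ℝ (Set.Icc w M) (fun t : ℝ => (u + v - t) ^ (3/2:ℝ)) := by
      have hcomp := (convexOn_rpow (p := (3/2:ℝ)) (by norm_num)).comp_affineMap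
        (AffineMap.lineMap (u+v) (u+v-1 : ℝ))
      have heq : ∀ t : ℝ, (AffineMap.lineMap (u+v) (u+v-1 : ℝ)) t = u + v - t := by
        intro t; rw [AffineMap.lineMap_apply_ring]; ring
      have hfun : ((fun x : ℝ => x ^ (3/2:ℝ)) ∘ (AffineMap.lineMap (u+v) (u+v-1 : ℝ)))
          = fun t : ℝ => (u + v - t) ^ (3/2:ℝ) := by
        funext t; simp [Function.comp, heq t]
      rw [hfun] at hcomp
      refine hcomp.subset (fun t ht => ?_) (convex_Icc _ _)
      simp only [Set.mem_preimage, heq t, Set.mem_Ici]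
      have := ht.2
      simp only [hw] at hw0 ⊢
      linarith [ht.2]
    have hseg : u ∈ segment ℝ w M := by rw [segment_eq_Icc hwM]; exact ⟨hwu, huM⟩
    have hmax := (c1.add c2).le_on_segment ⟨le_refl w, hwM⟩ ⟨hwM, le_refl M⟩ hseg
    have e1 : u + v - u = v := by ring
    have e2 : u + v - w = M := by simp only [hw]; ring
    have e3 : u + v - M = w := by simp only [hw]
    simp only [Pi.add_apply, e1, e2, e3] at hmax
    have : max (w ^ (3/2:ℝ) + M ^ (3/2:ℝ)) (M ^ (3/2:ℝ) + w ^ (3/2:ℝ))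
        = w ^ (3/2:ℝ) + M ^ (3/2:ℝ) := by rw [add_comm (M ^ (3/2:ℝ))]; exact max_self _
    rw [this] at hmax
    have hwm' : w ^ (3/2:ℝ) ≤ m ^ (3/2:ℝ) := Real.rpow_le_rpow hw0 hwm (by norm_num)
    linarith

lemma reindex_sum {k : ℕ} (hk : 0 < k) (F : ℕ → ℝ) (hFk : F k = 0) :
    ∑ i : Fin k, (F i + F ((i : ℕ) + 1)) =
      F 0 + 2 * ∑ j : Fin k, (if 1 ≤ (j : ℕ) then F (j : ℕ) else 0) := by
  rw [Finset.sum_add_distrib]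
  have h1 : ∑ i : Fin k, F (i : ℕ) = ∑ n ∈ Finset.range k, F n :=
    (Fin.sum_univ_eq_sum_range (fun n => F n) k)
  have h2 : ∑ i : Fin k, F ((i : ℕ) + 1) = ∑ n ∈ Finset.range k, F (n + 1) :=
    (Fin.sum_univ_eq_sum_range (fun n => F (n + 1)) k)
  have h3 : ∑ j : Fin k, (if 1 ≤ (j : ℕ) then F (j : ℕ) else 0)
      = ∑ n ∈ Finset.range k, (if 1 ≤ n then F n else 0) :=
    (Fin.sum_univ_eq_sum_range (fun n => if 1 ≤ n then F n else 0) k)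
  rw [h1, h2, h3]
  set G : ℕ → ℝ := fun n => if 1 ≤ n then F n else 0 with hG
  have hFG : ∀ n ∈ Finset.range k, F n = G n + (if n = 0 then F 0 else 0) := by
    intro n _
    rcases Nat.eq_zero_or_pos n with rfl | hn
    · simp [hG]
    · have e1 : (1:ℕ) ≤ n := hn
      have e2 : ¬ n = 0 := by omega
      simp [hG, e1, e2]
  have hsumF : ∑ n ∈ Finset.range k, F n = (∑ n ∈ Finset.range k, G n) + F 0 := by
    rw [Finset.sum_congr rfl hFG, Finset.sum_add_distrib]
    congr 1
    rw [Finset.sum_ite_eq' (Finset.range k) 0 (fun _ => F 0)]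
    simp [Finset.mem_range, hk]
  have hshift : ∑ n ∈ Finset.range k, F (n + 1) = ∑ n ∈ Finset.range k, G n := by
    have := Finset.sum_range_succ' F k
    -- ∑_{n < k+1} F n = (∑_{n<k} F (n+1)) + F 0
    have h4 : ∑ n ∈ Finset.range (k + 1), F n = (∑ n ∈ Finset.range k, F n) + F k :=
      Finset.sum_range_succ F k
    rw [h4, hFk, add_zero, hsumF] at this
    linarith
  rw [hsumF, hshift]; ring


lemma Theta_nonneg (k : ℕ) (x : Fin k → ℝ) : 0 ≤ Theta k x := by
  unfold Theta
  have h1 : (0:ℝ) ≤ ∑ i, |x i| := Finset.sum_nonneg fun i _ => abs_nonneg _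
  apply add_nonneg
  · exact mul_nonneg (by norm_num) (Real.rpow_nonneg h1 _)
  · refine mul_nonneg (by norm_num) (Finset.sum_nonneg fun j _ => ?_)
    split
    · exact Real.rpow_nonneg
        (Finset.sum_nonneg fun i _ => by split <;> simp [abs_nonneg]) _
    · exact le_refl 0

lemma Theta_abs (k : ℕ) (x : Fin k → ℝ) : Theta k (fun i => |x i|) = Theta k x := by
  simp [Theta, abs_abs]

lemma Theta_tl {k : ℕ} {x : Fin k → ℝ} (hx : ∀ i, 0 ≤ x i) :
    Theta k x = 2/3 * (tl k x 0) ^ (3/2 : ℝ) +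
      4/3 * ∑ j : Fin k, (if 1 ≤ (j : ℕ) then (tl k x (j : ℕ)) ^ (3/2 : ℝ) else 0) := by
  have habs : ∀ i, |x i| = x i := fun i => abs_of_nonneg (hx i)
  have h0 : tl k x 0 = ∑ i, x i := tl_zero' x
  have hin : ∀ j : Fin k, (∑ i : Fin k, if j ≤ i then x i else 0) = tl k x (j : ℕ) := by
    intro j
    exact Finset.sum_congr rfl fun i _ => if_congr Fin.le_def rfl rfl
  simp only [Theta, habs, hin, h0]

lemma Theta_smul {k : ℕ} (c : ℝ) (hc : 0 ≤ c) (x : Fin k → ℝ) :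
    Theta k (fun i => c * x i) = c ^ (3/2 : ℝ) * Theta k x := by
  unfold Theta
  have habs : ∀ i, |c * x i| = c * |x i| := fun i => by rw [abs_mul, abs_of_nonneg hc]
  have hrp : ∀ t : ℝ, 0 ≤ t → (c * t) ^ (3/2 : ℝ) = c ^ (3/2:ℝ) * t ^ (3/2:ℝ) :=
    fun t ht => Real.mul_rpow hc ht
  have hsum1 : (∑ i : Fin k, c * |x i|) = c * ∑ i : Fin k, |x i| := by
    rw [Finset.mul_sum]
  have hinner : ∀ j : Fin k, (∑ i : Fin k, if j ≤ i then c * |x i| else 0)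
      = c * ∑ i : Fin k, if j ≤ i then |x i| else 0 := by
    intro j
    rw [Finset.mul_sum]
    exact Finset.sum_congr rfl fun i _ => by split <;> simp
  simp only [habs, hinner, hsum1]
  rw [hrp _ (Finset.sum_nonneg fun i _ => abs_nonneg _)]
  have hite : ∀ j : Fin k,
      (if 1 ≤ (j:ℕ) then (c * ∑ i : Fin k, if j ≤ i then |x i| else 0) ^ (3/2:ℝ) else 0)
      = c ^ (3/2:ℝ) *
        (if 1 ≤ (j:ℕ) then (∑ i : Fin k, if j ≤ i then |x i| else 0) ^ (3/2:ℝ) else 0) := by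
    intro j
    split
    · exact hrp _ (Finset.sum_nonneg fun i _ => by split <;> simp [abs_nonneg])
    · simp
  simp only [hite, ← Finset.mul_sum]
  ring

lemma Yfun_eq {k : ℕ} (a b : Fin k → ℝ) (i : Fin k) :
    Yfun k a b i = tl k a ((i : ℕ) + 1) + tl k b (i : ℕ) := by
  unfold Yfun tl
  exact congrArg₂ (· + ·)
    (Finset.sum_congr rfl fun j _ => if_congr (by rw [Fin.lt_def]; omega) rfl rfl)
    (Finset.sum_congr rfl fun j _ => if_congr Fin.le_def rfl rfl)

lemma gObj_le_Theta {k : ℕ} (hk : 0 < k) (p : (Fin k → ℝ) × (Fin k → ℝ) × (Fin k → ℝ))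
    (hp : p ∈ Wset k) :
    gObj k p ≤ Theta k (fun i => 2 * p.1 i + 2 * p.2.1 i - |p.2.2 i|) := by
  obtain ⟨a, b, x⟩ := p
  have ha : ∀ i, 0 ≤ a i := fun i => (hp i).1
  have hb : ∀ i, 0 ≤ b i := fun i => (hp i).2.1
  have hxb : ∀ i, -b i ≤ x i := fun i => (hp i).2.2.1
  have hxa : ∀ i, x i ≤ a i := fun i => (hp i).2.2.2
  set s : Fin k → ℝ := fun i => 2 * a i + 2 * b i - |x i| with hs
  have habs : ∀ i, |x i| ≤ a i + b i := fun i =>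
    abs_le.mpr ⟨by linarith [hxb i, ha i], by linarith [hxa i, hb i]⟩
  have hs0 : ∀ i, 0 ≤ s i := fun i => by
    simp only [hs]; linarith [habs i, ha i, hb i]
  have hs_ge : ∀ i, a i + b i ≤ s i := fun i => by
    simp only [hs]; linarith [habs i]
  set F : ℕ → ℝ := fun n => (tl k s n) ^ (3/2:ℝ) with hF
  have key : ∀ i : Fin k,
      Yfun k a b i ^ (3/2:ℝ) + (Yfun k a b i + x i) ^ (3/2:ℝ)
        ≤ F (i : ℕ) + F ((i : ℕ) + 1) := by
    intro i
    rw [Yfun_eq]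
    have hstep_a := tl_step a i
    have hstep_b := tl_step b i
    have hstep_s := tl_step s i
    have htla := tl_nonneg ha ((i:ℕ)+1)
    have htlb := tl_nonneg hb ((i:ℕ)+1)
    have htlb' := tl_nonneg hb (i:ℕ)
    have hm := tl_nonneg hs0 ((i:ℕ)+1)
    have hab_le : ∀ n : ℕ, tl k a n + tl k b n ≤ tl k s n := by
      intro n
      have := tl_mono_fun hs_ge n
      rwa [tl_add] at this
    have hsucc_a := tl_succ_le ha (i:ℕ)
    have hxabs : x i + |x i| ≤ 2 * a i := by
      rcases abs_cases (x i) with ⟨h, _⟩ | ⟨h, _⟩ <;>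
        [linarith [hxa i]; linarith [ha i]]
    have hsi : s i = 2 * a i + 2 * b i - |x i| := rfl
    apply rpow_key
    · exact add_nonneg htla htlb'
    · rw [hstep_b]; linarith [hxb i]
    · exact hm
    · calc tl k a ((i:ℕ)+1) + tl k b (i:ℕ) ≤ tl k a (i:ℕ) + tl k b (i:ℕ) := by
            linarith [hsucc_a]
        _ ≤ tl k s (i:ℕ) := hab_le _
    · calc tl k a ((i:ℕ)+1) + tl k b (i:ℕ) + x i ≤ tl k a ((i:ℕ)+1) + tl k b (i:ℕ) + a i := by
            linarith [hxa i]
        _ = tl k a (i:ℕ) + tl k b (i:ℕ) := by rw [hstep_a]; ring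
        _ ≤ tl k s (i:ℕ) := hab_le _
    · have h1 := hab_le ((i:ℕ)+1)
      rw [hstep_s, hstep_b, hsi]
      linarith [hxabs]
  have hsum : gObj k (a, b, x) ≤ 2/3 * ∑ i : Fin k, (F (i:ℕ) + F ((i:ℕ)+1)) := by
    have h := Finset.sum_le_sum (fun i (_ : i ∈ Finset.univ) => key i)
    unfold gObj
    simp only
    linarith [h]
  have hFk : F k = 0 := by
    rw [hF]; simp only [tl_top]; exact Real.zero_rpow (by norm_num)
  rw [reindex_sum hk F hFk] at hsum
  have hTheta : Theta k (fun i => 2 * a i + 2 * b i - |x i|)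
      = 2/3 * (tl k s 0) ^ (3/2 : ℝ) +
        4/3 * ∑ j : Fin k, (if 1 ≤ (j : ℕ) then (tl k s (j : ℕ)) ^ (3/2 : ℝ) else 0) := by
    have := Theta_tl (x := s) hs0
    simpa only [hs] using this
  calc gObj k (a, b, x) ≤ 2/3 * (F 0 + 2 * ∑ j : Fin k, (if 1 ≤ (j:ℕ) then F (j:ℕ) else 0)) :=
        hsum
    _ = Theta k (fun i => 2 * a i + 2 * b i - |x i|) := by
        rw [hTheta]; simp only [hF]; ring

lemma tl_zero_fun {k : ℕ} (n : ℕ) : tl k (fun _ => (0:ℝ)) n = 0 := by simp [tl]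

lemma Theta_le_scaled {k : ℕ} {αk : ℝ}
    (hub : αk ∈ upperBounds (Theta k '' {x : Fin k → ℝ | ∑ i : Fin k, x i ^ 2 = 1}))
    (hαk0 : 0 ≤ αk) {β : ℝ} (hβ : 0 < β) {s : Fin k → ℝ} (_hs0 : ∀ i, 0 ≤ s i)
    (hs2 : ∑ i : Fin k, s i ^ 2 ≤ β ^ 2) :
    Theta k s ≤ β ^ (3/2:ℝ) * αk := by
  set r := Real.sqrt (∑ i, s i ^ 2) with hr
  have hq0 : (0:ℝ) ≤ ∑ i, s i ^ 2 := Finset.sum_nonneg fun i _ => sq_nonneg _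
  have hr0 : 0 ≤ r := Real.sqrt_nonneg _
  have hr2 : r ^ 2 = ∑ i, s i ^ 2 := Real.sq_sqrt hq0
  have hrβ : r ≤ β := by
    rw [hr]
    calc Real.sqrt (∑ i, s i ^ 2) ≤ Real.sqrt (β ^ 2) := Real.sqrt_le_sqrt hs2
      _ = β := Real.sqrt_sq hβ.le
  rcases eq_or_lt_of_le hr0 with h | h
  · have hz : ∑ i, s i ^ 2 = 0 := by rw [← hr2, ← h]; norm_num
    have hz' : ∀ i, s i = 0 := fun i =>
      pow_eq_zero_iff (n := 2) (by norm_num) |>.mp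
        ((Finset.sum_eq_zero_iff_of_nonneg (fun i _ => sq_nonneg _)).mp hz i
          (Finset.mem_univ i))
    have hT : Theta k s = 0 := by
      simp [Theta, hz', Real.zero_rpow (show (3/2:ℝ) ≠ 0 by norm_num)]
    rw [hT]
    exact mul_nonneg (Real.rpow_nonneg hβ.le _) hαk0
  · have hrne : r ≠ 0 := ne_of_gt h
    have hmem : (fun i => s i * r⁻¹) ∈ {x : Fin k → ℝ | ∑ i : Fin k, x i ^ 2 = 1} := by
      simp only [Set.mem_setOf_eq, mul_pow]
      rw [← Finset.sum_mul, ← hr2]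
      field_simp
    have hθ : Theta k (fun i => s i * r⁻¹) ≤ αk := hub ⟨_, hmem, rfl⟩
    have hrw : Theta k s = r ^ (3/2:ℝ) * Theta k (fun i => s i * r⁻¹) := by
      rw [← Theta_smul r hr0]
      congr 1
      funext i
      field_simp
    rw [hrw]
    calc r ^ (3/2:ℝ) * Theta k (fun i => s i * r⁻¹) ≤ r ^ (3/2:ℝ) * αk :=
          mul_le_mul_of_nonneg_left hθ (Real.rpow_nonneg hr0 _)
      _ ≤ β ^ (3/2:ℝ) * αk :=
          mul_le_mul_of_nonneg_right (Real.rpow_le_rpow hr0 hrβ (by norm_num)) hαk0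

/-- **Optimization lemma** (Lemma 6.3 of the paper). If `α_k` is the maximum of `Θ` over
the Euclidean unit sphere `{x : Σᵢ xᵢ² = 1}`, then for every `β > 0` the maximum of `g`
over `D_β` exists and equals `β^{3/2} α_k`. -/
theorem max_gObj_on_Dset (k : ℕ) (hk : 0 < k) (αk : ℝ)
    (hαk : IsGreatest (Theta k '' {x : Fin k → ℝ | ∑ i : Fin k, x i ^ 2 = 1}) αk)
    (β : ℝ) (hβ : 0 < β) :
    IsGreatest (gObj k '' Dset k β) (β ^ (3 / 2 : ℝ) * αk) := by
  obtain ⟨x₀, hx₀, hx₀val⟩ := hαk.1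
  have hx₀' : ∑ i : Fin k, x₀ i ^ 2 = 1 := hx₀
  have hαk0 : 0 ≤ αk := hx₀val ▸ Theta_nonneg k x₀
  constructor
  · -- membership: the point (a, 0, a) with a = β|x₀| attains the value
    set a : Fin k → ℝ := fun i => β * |x₀ i| with hadef
    have ha0 : ∀ i, 0 ≤ a i := fun i => by simp only [hadef]; positivity
    refine ⟨(a, fun _ => 0, a), ⟨fun i => ⟨ha0 i, le_refl 0, by simpa using ha0 i, le_refl _⟩, ?_⟩, ?_⟩
    · -- constraint
      show ∑ i : Fin k, (2 * a i + 2 * (0:ℝ) - |a i|) ^ 2 ≤ β ^ 2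
      have hterm : ∀ i : Fin k, (2 * a i + 2 * (0:ℝ) - |a i|) ^ 2 = β ^ 2 * x₀ i ^ 2 := by
        intro i
        rw [abs_of_nonneg (ha0 i), show 2 * a i + 2 * (0:ℝ) - a i = a i by ring]
        simp only [hadef]
        rw [mul_pow, sq_abs]
      rw [Finset.sum_congr rfl (fun i _ => hterm i), ← Finset.mul_sum, hx₀', mul_one]
    · -- value
      show gObj k (a, fun _ => 0, a) = β ^ (3/2:ℝ) * αk
      have hY : ∀ i : Fin k, Yfun k a (fun _ => 0) i = tl k a ((i:ℕ) + 1) := by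
        intro i; rw [Yfun_eq, tl_zero_fun, add_zero]
      have hY2 : ∀ i : Fin k, Yfun k a (fun _ => 0) i + a i = tl k a (i:ℕ) := by
        intro i; rw [hY i, tl_step a i]; ring
      set F : ℕ → ℝ := fun n => (tl k a n) ^ (3/2:ℝ) with hF
      have hg : gObj k (a, fun _ => 0, a) = 2/3 * ∑ i : Fin k, (F (i:ℕ) + F ((i:ℕ) + 1)) := by
        unfold gObj
        simp only
        congr 1
        refine Finset.sum_congr rfl fun i _ => ?_
        rw [hY2 i, hY i]
        simp only [hF]
        ring
      have hFk : F k = 0 := by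
        simp only [hF, tl_top]; exact Real.zero_rpow (by norm_num)
      rw [hg, reindex_sum hk F hFk]
      have hTa : Theta k a = 2/3 * (tl k a 0) ^ (3/2:ℝ) +
          4/3 * ∑ j : Fin k, (if 1 ≤ (j:ℕ) then (tl k a (j:ℕ)) ^ (3/2:ℝ) else 0) :=
        Theta_tl ha0
      have heq : 2/3 * (F 0 + 2 * ∑ j : Fin k, (if 1 ≤ (j:ℕ) then F (j:ℕ) else 0))
          = Theta k a := by
        rw [hTa]; simp only [hF]; ring
      rw [heq]
      rw [hadef, Theta_smul β hβ.le (fun i => |x₀ i|), Theta_abs, hx₀val]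
  · -- upper bound
    rintro z ⟨p, hp, rfl⟩
    have hs0 : ∀ i, 0 ≤ 2 * p.1 i + 2 * p.2.1 i - |p.2.2 i| := by
      intro i
      obtain ⟨h1, h2, h3, h4⟩ := hp.1 i
      rcases abs_cases (p.2.2 i) with ⟨he, _⟩ | ⟨he, _⟩ <;> rw [he] <;> linarith
    exact (gObj_le_Theta hk p hp.1).trans
      (Theta_le_scaled hαk.2 hαk0 hβ hs0 hp.2)
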